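/- Let k ≥ 2, and work in the fused permutations algebra H_{k,n} (n ≥ 2). Let σ_0 be the diagram where one edge leaves the top ellipse to the first free point and the first free top point connects into the bottom ellipse (all else identity), and σ_1 the diagram crossing the first two free strands. Then σ_0 σ_1 σ_0 = (1/k) σ_1 σ_0 σ_1 + ((k-1)/k) h_2, where h_2 is the diagram with two edges from the top ellipse to the first two free bottom points and two edges from the first two free top points to the bottom ellipse. Equivalently, under the isomorphism with P_k C[S_{k+n}] P_k (P_k the symmetrizer on the first k points), this is an identity among the elements P_k δ_k P_k, P_k δ_{k+1} P_k and their products. -/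

import Mathlib

noncomputable def symmetrizer (k n : ℕ) : MonoidAlgebra ℂ (Equiv.Perm (Fin (k + n))) :=
  ((k.factorial : ℂ))⁻¹ • ∑ w : Equiv.Perm (Fin k),
    MonoidAlgebra.of ℂ (Equiv.Perm (Fin (k + n)))
      (w.viaEmbedding (Fin.castLEEmb (Nat.le_add_right k n)))

namespace SP
open Equiv Equiv.Perm Finset

noncomputable def em (k n : ℕ) : Fin k ↪ Fin (k + n) := Fin.castLEEmb (Nat.le_add_right k n)

@[simp] lemma em_val (k n : ℕ) (i : Fin k) : (em k n i : ℕ) = i := rfl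

noncomputable def ι (k n : ℕ) : Perm (Fin k) →* Perm (Fin (k + n)) :=
  viaEmbeddingHom (em k n)

lemma ι_em (k n : ℕ) (w : Perm (Fin k)) (i : Fin k) :
    ι k n w (em k n i) = em k n (w i) :=
  w.viaEmbedding_apply (em k n) i

lemma ι_fix (k n : ℕ) (w : Perm (Fin k)) (x : Fin (k + n)) (hx : k ≤ (x : ℕ)) :
    ι k n w x = x := by
  apply Equiv.Perm.viaEmbedding_apply_of_notMem
  rintro ⟨l, rfl⟩
  exact absurd hx (by simpa using l.isLt)

lemma ι_swap (k n : ℕ) (i j : Fin k) :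
    ι k n (Equiv.swap i j) = Equiv.swap (em k n i) (em k n j) := by
  ext x
  by_cases hx : (x : ℕ) < k
  · obtain ⟨l, rfl⟩ : ∃ l, em k n l = x := ⟨⟨x, hx⟩, rfl⟩
    rw [ι_em, (em k n).injective.swap_apply]
  · rw [ι_fix _ _ _ _ (le_of_not_gt hx),
      Equiv.swap_apply_of_ne_of_ne (fun h => hx (by rw [h]; simpa using i.isLt))
        (fun h => hx (by rw [h]; simpa using j.isLt))]

lemma conj_swap (k n : ℕ) (v : Perm (Fin k)) (i : Fin k) (b : Fin (k + n))
    (hb : k ≤ (b : ℕ)) :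
    ι k n v * Equiv.swap (em k n i) b * (ι k n v)⁻¹ = Equiv.swap (em k n (v i)) b := by
  rw [← Equiv.swap_apply_apply, ι_em, ι_fix _ _ _ _ hb]

lemma mul_swap (k n : ℕ) (v : Perm (Fin k)) (i : Fin k) (b : Fin (k + n))
    (hb : k ≤ (b : ℕ)) :
    ι k n v * Equiv.swap (em k n i) b = Equiv.swap (em k n (v i)) b * ι k n v := by
  rw [← conj_swap k n v i b hb]; group

lemma conj_swap2 (k n : ℕ) (v : Perm (Fin k)) (i j : Fin k) (b c : Fin (k + n))
    (hb : k ≤ (b : ℕ)) (hc : k ≤ (c : ℕ)) :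
    ι k n v * (Equiv.swap (em k n i) b * Equiv.swap (em k n j) c)
      = (Equiv.swap (em k n (v i)) b * Equiv.swap (em k n (v j)) c) * ι k n v := by
  have h1 := mul_swap k n v i b hb
  have h2 := mul_swap k n v j c hc
  calc ι k n v * (Equiv.swap (em k n i) b * Equiv.swap (em k n j) c)
      = (ι k n v * Equiv.swap (em k n i) b) * Equiv.swap (em k n j) c := by group
    _ = Equiv.swap (em k n (v i)) b * (ι k n v * Equiv.swap (em k n j) c) := by
        rw [h1]; group
    _ = _ := by rw [h2]; group

lemma comm_swap (k n : ℕ) (w : Perm (Fin k)) (b c : Fin (k + n))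
    (hb : k ≤ (b : ℕ)) (hc : k ≤ (c : ℕ)) :
    Equiv.swap b c * ι k n w = ι k n w * Equiv.swap b c := by
  have h := Equiv.swap_apply_apply (ι k n w) b c
  rw [ι_fix _ _ _ _ hb, ι_fix _ _ _ _ hc] at h
  have h2 : ι k n w * Equiv.swap b c * (ι k n w)⁻¹ = Equiv.swap b c := h.symm
  calc Equiv.swap b c * ι k n w
      = (ι k n w * Equiv.swap b c * (ι k n w)⁻¹) * ι k n w := by rw [h2]
    _ = ι k n w * Equiv.swap b c := by group

noncomputable def og (k n : ℕ) : Perm (Fin (k + n)) →* MonoidAlgebra ℂ (Perm (Fin (k + n))) :=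
  MonoidAlgebra.of ℂ _

noncomputable def Fh (k n : ℕ) : Perm (Fin k) →* MonoidAlgebra ℂ (Perm (Fin (k + n))) :=
  (og k n).comp (ι k n)

lemma symmetrizer_eq (k n : ℕ) :
    symmetrizer k n = ((k.factorial : ℂ))⁻¹ • ∑ w, Fh k n w := rfl

lemma P_mul_F (k n : ℕ) (w₀ : Perm (Fin k)) :
    symmetrizer k n * Fh k n w₀ = symmetrizer k n := by
  rw [symmetrizer_eq, smul_mul_assoc, Finset.sum_mul]
  congr 1
  rw [← Equiv.sum_comp (Equiv.mulRight w₀) (⇑(Fh k n))]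
  refine Finset.sum_congr rfl fun w _ => ?_
  show Fh k n w * Fh k n w₀ = Fh k n (w * w₀)
  rw [map_mul]

lemma F_mul_P (k n : ℕ) (w₀ : Perm (Fin k)) :
    Fh k n w₀ * symmetrizer k n = symmetrizer k n := by
  rw [symmetrizer_eq, mul_smul_comm, Finset.mul_sum]
  congr 1
  rw [← Equiv.sum_comp (Equiv.mulLeft w₀) (⇑(Fh k n))]
  refine Finset.sum_congr rfl fun w _ => ?_
  show Fh k n w₀ * Fh k n w = Fh k n (w₀ * w)
  rw [map_mul]

lemma P_sq (k n : ℕ) : symmetrizer k n * symmetrizer k n = symmetrizer k n := by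
  nth_rewrite 2 [symmetrizer_eq]
  rw [mul_smul_comm, Finset.mul_sum]
  rw [Finset.sum_congr rfl fun w _ => P_mul_F k n w]
  rw [Finset.sum_const, Finset.card_univ, Fintype.card_perm, Fintype.card_fin,
    ← Nat.cast_smul_eq_nsmul ℂ, smul_smul,
    inv_mul_cancel₀ (by exact_mod_cast k.factorial_ne_zero), one_smul]

lemma P_comm (k n : ℕ) (b c : Fin (k + n)) (hb : k ≤ (b : ℕ)) (hc : k ≤ (c : ℕ)) :
    og k n (Equiv.swap b c) * symmetrizer k n = symmetrizer k n * og k n (Equiv.swap b c) := by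
  rw [symmetrizer_eq, mul_smul_comm, smul_mul_assoc, Finset.mul_sum, Finset.sum_mul]
  congr 1
  refine Finset.sum_congr rfl fun w _ => ?_
  show og k n (Equiv.swap b c) * Fh k n w = Fh k n w * og k n (Equiv.swap b c)
  have : Fh k n w = og k n (ι k n w) := rfl
  rw [this, ← map_mul, ← map_mul, comm_swap k n w b c hb hc]


section SectionM
variable {M : Type*} [AddCommMonoid M]


variable {M : Type*} [AddCommMonoid M]

lemma sum_perm_apply {m : ℕ} (x : Fin (m+1)) (F : Fin (m+1) → M) :
    ∑ w : Perm (Fin (m+1)), F (w x) = m.factorial • ∑ i, F i := by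
  have h1 : ∑ w : Perm (Fin (m+1)), F (w x)
      = ∑ w : Perm (Fin (m+1)), F (w 0) := by
    rw [← Equiv.sum_comp (Equiv.mulRight (Equiv.swap 0 x)) (fun w => F (w 0))]
    simp [Equiv.Perm.mul_apply]
  rw [h1, ← Equiv.sum_comp (Equiv.Perm.decomposeFin.symm)
    (fun w : Perm (Fin (m+1)) => F (w 0)), Fintype.sum_prod_type]
  simp [Equiv.Perm.decomposeFin_symm_apply_zero, Fintype.card_perm, ← Finset.smul_sum]

lemma sum_fin_split {m : ℕ} (i : Fin (m+2)) (G : Fin (m+2) → M) :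
    ∑ j, G j = G i + ∑ q : Fin (m+1), G (Equiv.swap 0 i q.succ) := by
  rw [← Equiv.sum_comp (Equiv.swap 0 i) G, Fin.sum_univ_succ]
  simp

lemma sum_perm_apply_pair {m : ℕ} (x y : Fin (m+2)) (hxy : x ≠ y)
    (F : Fin (m+2) → Fin (m+2) → M) :
    ∑ w : Perm (Fin (m+2)), F (w x) (w y)
      = m.factorial • ∑ p, ∑ q : Fin (m+1), F p (Equiv.swap 0 p q.succ) := by
  set c : Perm (Fin (m+2)) := Equiv.swap 0 x * Equiv.swap 1 (Equiv.swap 0 x y) with hc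
  have hc0 : c 0 = x := by
    have h1 : (0 : Fin (m+2)) ≠ 1 := by simp [Fin.ext_iff]
    have h2 : (0 : Fin (m+2)) ≠ Equiv.swap 0 x y := by
      intro h
      exact hxy ((Equiv.swap 0 x).injective (by simp [← h])).symm
    simp [hc, Equiv.Perm.mul_apply, Equiv.swap_apply_of_ne_of_ne h1 h2]
  have hc1 : c 1 = y := by
    simp [hc, Equiv.Perm.mul_apply]
  have h1 : ∑ w : Perm (Fin (m+2)), F (w x) (w y)
      = ∑ w : Perm (Fin (m+2)), F (w 0) (w 1) := by
    rw [← Equiv.sum_comp (Equiv.mulRight c) (fun w => F (w 0) (w 1))]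
    simp [Equiv.Perm.mul_apply, hc0, hc1]
  rw [h1, ← Equiv.sum_comp (Equiv.Perm.decomposeFin.symm)
    (fun w : Perm (Fin (m+2)) => F (w 0) (w 1)), Fintype.sum_prod_type]
  simp only [Equiv.Perm.decomposeFin_symm_apply_zero,
    Equiv.Perm.decomposeFin_symm_apply_one]
  rw [smul_sum]
  refine Finset.sum_congr rfl fun p _ => ?_
  exact sum_perm_apply 0 (fun q => F p (Equiv.swap 0 p q.succ))


variable {α : Type*} [DecidableEq α]

lemma swap3_id {p b c : α} (hpb : p ≠ b) (hpc : p ≠ c) (hbc : b ≠ c) :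
    Equiv.swap p b * Equiv.swap b c * Equiv.swap p b = Equiv.swap p c := by
  have h := Equiv.swap_apply_apply (Equiv.swap p b) b c
  rw [Equiv.swap_apply_right, Equiv.swap_apply_of_ne_of_ne hpc.symm hbc.symm,
    Equiv.swap_inv] at h
  exact h.symm

lemma swap4_id {p q b c : α} (hpq : p ≠ q) (hpb : p ≠ b) (hpc : p ≠ c)
    (hqb : q ≠ b) (hqc : q ≠ c) (hbc : b ≠ c) :
    Equiv.swap p b * Equiv.swap b c * Equiv.swap q b
      = Equiv.swap p q * (Equiv.swap p b * Equiv.swap q c) := by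
  ext x
  simp only [Equiv.Perm.mul_apply, Equiv.swap_apply_def]
  split_ifs <;> simp_all

lemma sum_perm_apply' {m : ℕ} (x : Fin (m+2)) (F : Fin (m+2) → M) :
    ∑ w : Perm (Fin (m+2)), F (w x) = (m+1).factorial • ∑ i, F i :=
  sum_perm_apply x F

end SectionM

lemma PgP (k n : ℕ) (g : Perm (Fin (k + n))) (c : Perm (Fin k) → Perm (Fin (k + n)))
    (hc : ∀ w, g * ι k n w = ι k n w * c w) :
    symmetrizer k n * og k n g * symmetrizer k n
      = ((k.factorial : ℂ))⁻¹ • ∑ w, symmetrizer k n * og k n (c w) := by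
  nth_rewrite 2 [symmetrizer_eq]
  rw [mul_smul_comm, Finset.mul_sum]
  congr 1
  refine Finset.sum_congr rfl fun w _ => ?_
  have h : og k n g * Fh k n w = Fh k n w * og k n (c w) := by
    show og k n g * og k n (ι k n w) = og k n (ι k n w) * og k n (c w)
    rw [← map_mul, ← map_mul, hc w]
  rw [mul_assoc, h, ← mul_assoc, P_mul_F]

lemma PgPP (k n : ℕ) (g : Perm (Fin (k + n))) (c : Perm (Fin k) → Perm (Fin (k + n)))
    (hc : ∀ w, g * ι k n w = ι k n w * c w) :
    symmetrizer k n * og k n g * symmetrizer k n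
      = ((k.factorial : ℂ))⁻¹ • ∑ w, symmetrizer k n * og k n (c w) * symmetrizer k n := by
  have h1 := PgP k n g c hc
  calc symmetrizer k n * og k n g * symmetrizer k n
      = symmetrizer k n * og k n g * symmetrizer k n * symmetrizer k n := by
        conv_rhs => rw [mul_assoc, P_sq]
    _ = (((k.factorial : ℂ))⁻¹ • ∑ w, symmetrizer k n * og k n (c w)) * symmetrizer k n := by
        rw [h1]
    _ = _ := by rw [smul_mul_assoc, Finset.sum_mul]

lemma PgP_left (k n : ℕ) (g : Perm (Fin (k + n))) (c : Perm (Fin k) → Perm (Fin (k + n)))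
    (hc : ∀ v, ι k n v * g = c v * ι k n v) :
    symmetrizer k n * og k n g * symmetrizer k n
      = ((k.factorial : ℂ))⁻¹ • ∑ v, og k n (c v) * symmetrizer k n := by
  nth_rewrite 1 [symmetrizer_eq]
  rw [smul_mul_assoc, smul_mul_assoc, Finset.sum_mul, Finset.sum_mul]
  congr 1
  refine Finset.sum_congr rfl fun v _ => ?_
  have h : Fh k n v * og k n g = og k n (c v) * Fh k n v := by
    show og k n (ι k n v) * og k n g = og k n (c v) * og k n (ι k n v)
    rw [← map_mul, ← map_mul, hc v]
  rw [h, mul_assoc, F_mul_P]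

end SP

set_option maxHeartbeats 1600000 in
open Equiv Equiv.Perm Finset SP in
/-- In `H_{k,n} = P_k ℂ[S_{k+n}] P_k` with `k ≥ 2` and `n ≥ 2`, setting
`σ₀ = P_k δ_k P_k`, `σ₁ = P_k δ_{k+1} P_k`, and
`h₂ = P_k w P_k` where `w = (k-1, k+1)(k, k+2)` (1-based) is a permutation representing the
diagram with two edges from the top ellipse to the first two free bottom points and two edges
from the first two free top points into the bottom ellipse, we have
`σ₀ σ₁ σ₀ = (1/k) σ₁ σ₀ σ₁ + ((k-1)/k) h₂`. -/
theorem sigma0_sigma1_sigma0 (k n : ℕ) (hk : 2 ≤ k) (hn : 2 ≤ n) :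
    let P := symmetrizer k n
    let σ₀ := P * MonoidAlgebra.of ℂ (Equiv.Perm (Fin (k + n)))
      (Equiv.swap (⟨k - 1, by omega⟩ : Fin (k + n)) ⟨k, by omega⟩) * P
    let σ₁ := P * MonoidAlgebra.of ℂ (Equiv.Perm (Fin (k + n)))
      (Equiv.swap (⟨k, by omega⟩ : Fin (k + n)) ⟨k + 1, by omega⟩) * P
    let h₂ := P * MonoidAlgebra.of ℂ (Equiv.Perm (Fin (k + n)))
      (Equiv.swap (⟨k - 2, by omega⟩ : Fin (k + n)) ⟨k, by omega⟩ *
        Equiv.swap (⟨k - 1, by omega⟩ : Fin (k + n)) ⟨k + 1, by omega⟩) * P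
    σ₀ * σ₁ * σ₀ = (k : ℂ)⁻¹ • (σ₁ * σ₀ * σ₁) + (((k : ℂ) - 1) / (k : ℂ)) • h₂ := by
  intro P σ₀ σ₁ h₂
  obtain ⟨m, rfl⟩ : ∃ m, k = m + 2 := ⟨k - 2, by omega⟩
  have hmn : m + 3 < m + 2 + n := by omega
  set B : Fin (m + 2 + n) := ⟨m + 2, by omega⟩ with hBdef
  set C : Fin (m + 2 + n) := ⟨m + 3, by omega⟩ with hCdef
  set x0 : Fin (m + 2) := ⟨m, by omega⟩ with hx0def
  set y0 : Fin (m + 2) := ⟨m + 1, by omega⟩ with hy0def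
  have hBle : m + 2 ≤ (B : ℕ) := le_of_eq rfl
  have hCle : m + 2 ≤ (C : ℕ) := by simp [hCdef]
  have hBC : B ≠ C := by
    intro h; have := congrArg Fin.val h; simp [hBdef, hCdef] at this
  have hemB : ∀ i : Fin (m + 2), em (m + 2) n i ≠ B := by
    intro i h
    have hv := congrArg Fin.val h
    rw [em_val] at hv
    have := i.isLt; simp [hBdef] at hv; omega
  have hemC : ∀ i : Fin (m + 2), em (m + 2) n i ≠ C := by
    intro i h
    have hv := congrArg Fin.val h
    rw [em_val] at hv
    have := i.isLt; simp [hCdef] at hv; omega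
  -- basic equalities with let-bound objects
  have hσ0 : σ₀ = symmetrizer (m+2) n *
      og (m+2) n (Equiv.swap (em (m+2) n y0) B) * symmetrizer (m+2) n := rfl
  have hσ1 : σ₁ = symmetrizer (m+2) n *
      og (m+2) n (Equiv.swap B C) * symmetrizer (m+2) n := rfl
  have hh2 : h₂ = symmetrizer (m+2) n *
      og (m+2) n (Equiv.swap (em (m+2) n x0) B * Equiv.swap (em (m+2) n y0) C) *
      symmetrizer (m+2) n := rfl
  have hSS := P_sq (m+2) n
  have hcomm := P_comm (m+2) n B C hBle hCle
  have hfact : (((m+2).factorial : ℂ))⁻¹ * ((m+1).factorial : ℂ) = ((m+2 : ℕ) : ℂ)⁻¹ := by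
    rw [show (m+2) = (m+1) + 1 from rfl, Nat.factorial_succ]
    have h1 : (((m+1).factorial : ℂ)) ≠ 0 := by exact_mod_cast (m+1).factorial_ne_zero
    have h2 : ((m + 1 + 1 : ℕ) : ℂ) ≠ 0 := by exact_mod_cast (Nat.succ_ne_zero (m+1))
    push_cast
    field_simp
  -- σ₁ forms
  have hσ₁r : σ₁ = og (m+2) n (Equiv.swap B C) * symmetrizer (m+2) n := by
    rw [hσ1, hcomm.symm, mul_assoc, hSS]
  have hσ₁l : σ₁ = symmetrizer (m+2) n * og (m+2) n (Equiv.swap B C) := hσ₁r.trans hcomm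
  -- σ₀ forms
  obtain ⟨A, hA⟩ : ∃ A' : MonoidAlgebra ℂ (Perm (Fin (m + 2 + n))),
      A' = ((m+2 : ℕ) : ℂ)⁻¹ • ∑ i, og (m+2) n (Equiv.swap (em (m+2) n i) B) :=
    ⟨_, rfl⟩
  have hσ₀r : σ₀ = A * symmetrizer (m+2) n := by
    rw [hσ0, PgP_left (m+2) n (Equiv.swap (em (m+2) n y0) B)
        (fun v => Equiv.swap (em (m+2) n (v y0)) B)
        (fun v => mul_swap (m+2) n v y0 B hBle)]
    rw [sum_perm_apply' y0
        (fun i => og (m+2) n (Equiv.swap (em (m+2) n i) B) * symmetrizer (m+2) n)]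
    rw [← Nat.cast_smul_eq_nsmul ℂ, smul_smul, hfact, hA, smul_mul_assoc, Finset.sum_mul]
  have hσ₀l : σ₀ = symmetrizer (m+2) n * A := by
    have hc : ∀ w : Perm (Fin (m+2)), Equiv.swap (em (m+2) n y0) B * ι (m+2) n w
        = ι (m+2) n w * Equiv.swap (em (m+2) n (w⁻¹ y0)) B := by
      intro w
      have h := mul_swap (m+2) n w (w⁻¹ y0) B hBle
      rw [show w (w⁻¹ y0) = y0 from w.apply_symm_apply y0] at h
      exact h.symm
    rw [hσ0, PgP (m+2) n (Equiv.swap (em (m+2) n y0) B)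
        (fun w => Equiv.swap (em (m+2) n (w⁻¹ y0)) B) hc]
    rw [Fintype.sum_equiv (Equiv.inv (Perm (Fin (m+2))))
        (fun w => symmetrizer (m+2) n * og (m+2) n (Equiv.swap (em (m+2) n (w⁻¹ y0)) B))
        (fun w => symmetrizer (m+2) n * og (m+2) n (Equiv.swap (em (m+2) n (w y0)) B))
        (fun w => rfl)]
    rw [sum_perm_apply' y0
        (fun i => symmetrizer (m+2) n * og (m+2) n (Equiv.swap (em (m+2) n i) B))]
    rw [← Nat.cast_smul_eq_nsmul ℂ, smul_smul, hfact, hA, mul_smul_comm, Finset.mul_sum]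
  have hPA : symmetrizer (m+2) n * A = A * symmetrizer (m+2) n := hσ₀l.symm.trans hσ₀r
  -- h₂ expansion
  have hx0y0 : x0 ≠ y0 := by
    intro h; have := congrArg Fin.val h; simp [hx0def, hy0def] at this
  have hH2 : h₂ = (((m+2).factorial : ℂ))⁻¹ • (m.factorial •
      ∑ p, ∑ q : Fin (m+1), symmetrizer (m+2) n *
        og (m+2) n (Equiv.swap (em (m+2) n p) B *
          Equiv.swap (em (m+2) n (Equiv.swap 0 p q.succ)) C) * symmetrizer (m+2) n) := by
    have hc : ∀ w : Perm (Fin (m+2)),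
        (Equiv.swap (em (m+2) n x0) B * Equiv.swap (em (m+2) n y0) C) * ι (m+2) n w
          = ι (m+2) n w * (Equiv.swap (em (m+2) n (w⁻¹ x0)) B *
              Equiv.swap (em (m+2) n (w⁻¹ y0)) C) := by
      intro w
      have h := conj_swap2 (m+2) n w (w⁻¹ x0) (w⁻¹ y0) B C hBle hCle
      rw [show w (w⁻¹ x0) = x0 from w.apply_symm_apply x0,
        show w (w⁻¹ y0) = y0 from w.apply_symm_apply y0] at h
      exact h.symm
    rw [hh2, PgPP (m+2) n _ (fun w => Equiv.swap (em (m+2) n (w⁻¹ x0)) B *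
        Equiv.swap (em (m+2) n (w⁻¹ y0)) C) hc]
    rw [Fintype.sum_equiv (Equiv.inv (Perm (Fin (m+2))))
        (fun w => symmetrizer (m+2) n * og (m+2) n (Equiv.swap (em (m+2) n (w⁻¹ x0)) B *
          Equiv.swap (em (m+2) n (w⁻¹ y0)) C) * symmetrizer (m+2) n)
        (fun w => symmetrizer (m+2) n * og (m+2) n (Equiv.swap (em (m+2) n (w x0)) B *
          Equiv.swap (em (m+2) n (w y0)) C) * symmetrizer (m+2) n)
        (fun w => rfl)]
    rw [sum_perm_apply_pair x0 y0 hx0y0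
        (fun p j => symmetrizer (m+2) n * og (m+2) n (Equiv.swap (em (m+2) n p) B *
          Equiv.swap (em (m+2) n j) C) * symmetrizer (m+2) n)]
  -- RHS1 : σ₁ σ₀ σ₁
  have hfold2 : symmetrizer (m+2) n * (symmetrizer (m+2) n * og (m+2) n (Equiv.swap B C))
      = og (m+2) n (Equiv.swap B C) * symmetrizer (m+2) n := by
    rw [← mul_assoc, hSS, ← hcomm]
  have merge1 : ∀ i : Fin (m+2), symmetrizer (m+2) n * (og (m+2) n (Equiv.swap B C) *
      (og (m+2) n (Equiv.swap (em (m+2) n i) B) *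
        (og (m+2) n (Equiv.swap B C) * symmetrizer (m+2) n)))
      = symmetrizer (m+2) n * og (m+2) n
          (Equiv.swap B C * Equiv.swap (em (m+2) n i) B * Equiv.swap B C) *
          symmetrizer (m+2) n := by
    intro i
    rw [map_mul, map_mul]
    simp only [mul_assoc]
  have hconj1 : ∀ i : Fin (m+2),
      Equiv.swap B C * Equiv.swap (em (m+2) n i) B * Equiv.swap B C
        = Equiv.swap (em (m+2) n i) C := by
    intro i
    have h := Equiv.swap_apply_apply (Equiv.swap B C) (em (m+2) n i) B
    rw [Equiv.swap_apply_of_ne_of_ne (hemB i) (hemC i), Equiv.swap_apply_left,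
      Equiv.swap_inv] at h
    exact h.symm
  have hRHS1 : σ₁ * σ₀ * σ₁ = ((m+2 : ℕ) : ℂ)⁻¹ •
      ∑ i, symmetrizer (m+2) n * og (m+2) n (Equiv.swap (em (m+2) n i) C) *
        symmetrizer (m+2) n := by
    rw [hσ₁l, hσ₀r]
    simp only [mul_assoc]
    rw [hfold2, hA]
    simp only [smul_mul_assoc, mul_smul_comm, Finset.mul_sum, Finset.sum_mul, smul_sum]
    have key : ∀ i : Fin (m+2), symmetrizer (m+2) n * (og (m+2) n (Equiv.swap B C) *
        (og (m+2) n (Equiv.swap (em (m+2) n i) B) *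
          (og (m+2) n (Equiv.swap B C) * symmetrizer (m+2) n)))
        = symmetrizer (m+2) n * (og (m+2) n (Equiv.swap (em (m+2) n i) C) *
            symmetrizer (m+2) n) := by
      intro i
      have h := merge1 i
      have hc := hconj1 i
      rw [mul_assoc] at hc
      simp only [mul_assoc] at h
      rw [h, hc]
    simp only [key]
  -- LHS
  have hfold : symmetrizer (m+2) n * (symmetrizer (m+2) n * A) = A * symmetrizer (m+2) n := by
    rw [← mul_assoc, hSS, hPA]
  have merge2 : ∀ i j : Fin (m+2), symmetrizer (m+2) n *
      (og (m+2) n (Equiv.swap (em (m+2) n i) B) * (og (m+2) n (Equiv.swap B C) *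
        (og (m+2) n (Equiv.swap (em (m+2) n j) B) * symmetrizer (m+2) n)))
      = symmetrizer (m+2) n * og (m+2) n
          (Equiv.swap (em (m+2) n i) B * Equiv.swap B C * Equiv.swap (em (m+2) n j) B) *
          symmetrizer (m+2) n := by
    intro i j
    rw [map_mul, map_mul]
    simp only [mul_assoc]
  have hLHS : σ₀ * σ₁ * σ₀ = ((m+2 : ℕ) : ℂ)⁻¹ • ((m+2 : ℕ) : ℂ)⁻¹ •
      ∑ i, ∑ j, symmetrizer (m+2) n * og (m+2) n
        (Equiv.swap (em (m+2) n i) B * Equiv.swap B C * Equiv.swap (em (m+2) n j) B) *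
        symmetrizer (m+2) n := by
    rw [hσ₀l, hσ₁r]
    simp only [mul_assoc]
    rw [hfold, hA]
    simp only [smul_mul_assoc, mul_smul_comm, Finset.mul_sum, Finset.sum_mul, smul_sum]
    have key : ∀ i j : Fin (m+2), symmetrizer (m+2) n *
        (og (m+2) n (Equiv.swap (em (m+2) n i) B) * (og (m+2) n (Equiv.swap B C) *
          (og (m+2) n (Equiv.swap (em (m+2) n j) B) * symmetrizer (m+2) n)))
        = symmetrizer (m+2) n * (og (m+2) n (Equiv.swap (em (m+2) n i) B *
            (Equiv.swap B C * Equiv.swap (em (m+2) n j) B)) * symmetrizer (m+2) n) := by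
      intro i j
      have h := merge2 i j
      simp only [mul_assoc] at h
      exact h
    simp only [key]
    exact Finset.sum_comm
  -- split the double sum
  have hsplit : ∀ i : Fin (m+2),
      ∑ j, symmetrizer (m+2) n * og (m+2) n
        (Equiv.swap (em (m+2) n i) B * Equiv.swap B C * Equiv.swap (em (m+2) n j) B) *
        symmetrizer (m+2) n
      = symmetrizer (m+2) n * og (m+2) n (Equiv.swap (em (m+2) n i) C) *
          symmetrizer (m+2) n
        + ∑ q : Fin (m+1), symmetrizer (m+2) n * og (m+2) n
            (Equiv.swap (em (m+2) n i) B *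
              Equiv.swap (em (m+2) n (Equiv.swap 0 i q.succ)) C) * symmetrizer (m+2) n := by
    intro i
    rw [sum_fin_split i (fun j => symmetrizer (m+2) n * og (m+2) n
        (Equiv.swap (em (m+2) n i) B * Equiv.swap B C * Equiv.swap (em (m+2) n j) B) *
        symmetrizer (m+2) n)]
    refine congrArg₂ (· + ·) ?_ ?_
    · rw [swap3_id (hemB i) (hemC i) hBC]
    · refine Finset.sum_congr rfl fun q _ => ?_
      have hij : i ≠ Equiv.swap 0 i q.succ := by
        intro h
        have h2 := congrArg (Equiv.swap 0 i) h
        rw [Equiv.swap_apply_right, Equiv.swap_apply_self] at h2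
        exact (Fin.succ_ne_zero q) h2.symm
      have hemne : em (m+2) n i ≠ em (m+2) n (Equiv.swap 0 i q.succ) :=
        fun h => hij ((em (m+2) n).injective h)
      have h4 : Equiv.swap (em (m+2) n i) B * Equiv.swap B C *
          Equiv.swap (em (m+2) n (Equiv.swap 0 i q.succ)) B
          = ι (m+2) n (Equiv.swap i (Equiv.swap 0 i q.succ)) *
            (Equiv.swap (em (m+2) n i) B *
              Equiv.swap (em (m+2) n (Equiv.swap 0 i q.succ)) C) := by
        rw [ι_swap]
        exact swap4_id hemne (hemB i) (hemC i) (hemB _) (hemC _) hBC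
      rw [h4, map_mul, ← mul_assoc]
      have hFh : og (m+2) n (ι (m+2) n (Equiv.swap i (Equiv.swap 0 i q.succ)))
          = Fh (m+2) n (Equiv.swap i (Equiv.swap 0 i q.succ)) := rfl
      rw [hFh, P_mul_F]
  -- assemble
  rw [hLHS, hRHS1, hH2]
  rw [Finset.sum_congr rfl fun i _ => hsplit i, Finset.sum_add_distrib]
  rw [← Nat.cast_smul_eq_nsmul ℂ (m.factorial)]
  simp only [smul_smul, smul_add]
  have h1 : ((m+2).factorial : ℂ) = ((m+2 : ℕ) : ℂ) * ((m+1 : ℕ) : ℂ) * (m.factorial : ℂ) := by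
    rw [show (m+2) = (m+1) + 1 from rfl, Nat.factorial_succ, Nat.factorial_succ]
    push_cast
    ring
  have h2 : ((m+2 : ℕ) : ℂ) ≠ 0 := by exact_mod_cast (Nat.succ_ne_zero (m+1))
  have h3 : ((m+1 : ℕ) : ℂ) ≠ 0 := by exact_mod_cast (Nat.succ_ne_zero m)
  have h4 : ((m.factorial : ℕ) : ℂ) ≠ 0 := by exact_mod_cast m.factorial_ne_zero
  have hsc : ((m+2 : ℕ) : ℂ)⁻¹ * ((m+2 : ℕ) : ℂ)⁻¹
      = (((m+2 : ℕ) : ℂ) - 1) / ((m+2 : ℕ) : ℂ) *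
        (((m+2).factorial : ℂ)⁻¹ * (m.factorial : ℂ)) := by
    have h5 : ((m+2 : ℕ) : ℂ) - 1 = ((m+1 : ℕ) : ℂ) := by push_cast; ring
    have hinv : (((m+2).factorial : ℂ))⁻¹
        = ((m+2 : ℕ) : ℂ)⁻¹ * ((m+1 : ℕ) : ℂ)⁻¹ * ((m.factorial : ℂ))⁻¹ := by
      rw [h1, mul_inv, mul_inv]
    rw [hinv, h5, div_eq_mul_inv]
    rw [show ((m+1:ℕ):ℂ) * ((m+2:ℕ):ℂ)⁻¹ *
        ((((m+2:ℕ):ℂ)⁻¹ * ((m+1:ℕ):ℂ)⁻¹ * ((m.factorial : ℂ))⁻¹) * ((m.factorial : ℕ):ℂ))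
        = (((m+1:ℕ):ℂ) * ((m+1:ℕ):ℂ)⁻¹) * (((m.factorial : ℂ))⁻¹ * ((m.factorial : ℕ):ℂ))
          * (((m+2:ℕ):ℂ)⁻¹ * ((m+2:ℕ):ℂ)⁻¹) from by ring]
    rw [mul_inv_cancel₀ h3, inv_mul_cancel₀ h4, one_mul, one_mul]
  rw [← hsc]
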